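/- Let f : F → C be a classifier on a finite product input space F = X_1 × ⋯ × X_n and let D be a product (feature-independent) distribution on F. Then the global sufficient value function v^g_suff is supermodular: for all S ⊆ S' ⊆ {1,…,n} and all i ∉ S', v^g_suff(S ∪ {i}) − v^g_suff(S) ≤ v^g_suff(S' ∪ {i}) − v^g_suff(S'). -/

import Mathlib

open Finset

open Classical in
/-- Conditional probability `Pr(A | B) = Pr(A ∩ B) / Pr(B)` over a finite space,
with mass function `P`. -/
noncomputable def condPr {F : Type*} [Fintype F] (P : F → ℝ) (A B : F → Prop) : ℝ :=
  (∑ z, if A z ∧ B z then P z else 0) / (∑ z, if B z then P z else 0)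

open Classical in
/-- The global sufficient value function
`v^g_suff(S) = Σ_{x : P x > 0} P x · Pr_{z∼D}(f z = f x | z_S = x_S)`. -/
noncomputable def vgSuff {n : ℕ} {X : Fin n → Type*} [∀ i, Fintype (X i)]
    {C : Type*} (f : (∀ i, X i) → C) (P : (∀ i, X i) → ℝ)
    (S : Finset (Fin n)) : ℝ :=
  ∑ x ∈ Finset.univ.filter (fun x => 0 < P x),
    P x * condPr P (fun z => f z = f x) (fun z => ∀ i ∈ S, z i = x i)

namespace VgAux

open Classical

variable {n : ℕ} {X : Fin n → Type*} [∀ i, Fintype (X i)]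

/-- Combine `x` on `S` with `z` off `S`. -/
def comb (S : Finset (Fin n)) (x z : ∀ i, X i) : ∀ i, X i :=
  fun j => if j ∈ S then x j else z j

lemma comb_cancel (S : Finset (Fin n)) (z w : ∀ i, X i) :
    comb S (comb S z w) (comb S w z) = z := by
  funext j; by_cases h : j ∈ S <;> simp [comb, h]

lemma comb_assoc (S T : Finset (Fin n)) (x z w : ∀ i, X i) :
    comb T (comb S x z) w = comb (S ∩ T) x (comb T z w) := by
  funext j
  by_cases hS : j ∈ S <;> by_cases hT : j ∈ T <;> simp [comb, hS, hT]

variable (P : (∀ i, X i) → ℝ)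

/-- Weighted inner product. -/
noncomputable def ip (g h : (∀ i, X i) → ℝ) : ℝ := ∑ x, P x * (g x * h x)

/-- Conditional-expectation-like projection onto coordinates in `S`. -/
noncomputable def proj (S : Finset (Fin n)) (h : (∀ i, X i) → ℝ) : (∀ i, X i) → ℝ :=
  fun x => ∑ z, P z * h (comb S x z)

lemma sum_comb
    (hPc : ∀ (T : Finset (Fin n)) (z w : ∀ i, X i),
      P (comb T z w) * P (comb T w z) = P z * P w)
    (S : Finset (Fin n)) (ψ : (∀ i, X i) → (∀ i, X i) → ℝ) :
    (∑ z, ∑ w, P z * P w * ψ (comb S z w) (comb S w z))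
      = ∑ z, ∑ w, P z * P w * ψ z w := by
  have he : Function.Involutive
      (fun q : (∀ i, X i) × (∀ i, X i) => (comb S q.1 q.2, comb S q.2 q.1)) := by
    intro q; simp [comb_cancel]
  calc (∑ z, ∑ w, P z * P w * ψ (comb S z w) (comb S w z))
      = ∑ q : (∀ i, X i) × (∀ i, X i),
          P q.1 * P q.2 * ψ (comb S q.1 q.2) (comb S q.2 q.1) :=
        (Fintype.sum_prod_type
          (f := fun q => P q.1 * P q.2 * ψ (comb S q.1 q.2) (comb S q.2 q.1))).symm
    _ = ∑ q : (∀ i, X i) × (∀ i, X i), P q.1 * P q.2 * ψ q.1 q.2 :=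
        Fintype.sum_bijective _ he.bijective _ _
          (fun q => by dsimp only; rw [hPc])
    _ = ∑ z, ∑ w, P z * P w * ψ z w :=
        Fintype.sum_prod_type (f := fun q => P q.1 * P q.2 * ψ q.1 q.2)

lemma ip_comm (g h : (∀ i, X i) → ℝ) : ip P g h = ip P h g := by
  unfold ip
  exact Finset.sum_congr rfl fun x _ => by ring

lemma ip_nonneg (hP0 : ∀ x, 0 ≤ P x) (g : (∀ i, X i) → ℝ) : 0 ≤ ip P g g :=
  Finset.sum_nonneg fun x _ => mul_nonneg (hP0 x) (mul_self_nonneg _)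

lemma ip_sub_sub (g h k l : (∀ i, X i) → ℝ) :
    ip P (fun x => g x - h x) (fun x => k x - l x)
      = ip P g k - ip P g l - ip P h k + ip P h l := by
  unfold ip
  rw [← Finset.sum_sub_distrib, ← Finset.sum_sub_distrib, ← Finset.sum_add_distrib]
  exact Finset.sum_congr rfl fun x _ => by ring

lemma ip_selfadj
    (hPc : ∀ (T : Finset (Fin n)) (z w : ∀ i, X i),
      P (comb T z w) * P (comb T w z) = P z * P w)
    (S : Finset (Fin n)) (g h : (∀ i, X i) → ℝ) :
    ip P g (proj P S h) = ip P h (proj P S g) := by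
  have key := sum_comb P hPc S (fun z w => h z * g (comb S z w))
  unfold ip proj
  calc ∑ x, P x * (g x * ∑ z, P z * h (comb S x z))
      = ∑ x, ∑ z, P x * P z * (h (comb S x z) * g (comb S (comb S x z) (comb S z x))) := by
        simp only [Finset.mul_sum]
        refine Finset.sum_congr rfl fun x _ => Finset.sum_congr rfl fun z _ => ?_
        rw [comb_cancel]
        ring
    _ = ∑ x, ∑ z, P x * P z * (h x * g (comb S x z)) := key
    _ = ∑ x, P x * (h x * ∑ z, P z * g (comb S x z)) := by
        simp only [Finset.mul_sum]
        exact Finset.sum_congr rfl fun x _ => Finset.sum_congr rfl fun z _ => by ring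

lemma proj_comp (hP1 : ∑ x, P x = 1)
    (hPc : ∀ (T : Finset (Fin n)) (z w : ∀ i, X i),
      P (comb T z w) * P (comb T w z) = P z * P w)
    (S T : Finset (Fin n)) (h : (∀ i, X i) → ℝ) (x : ∀ i, X i) :
    proj P S (proj P T h) x = proj P (S ∩ T) h x := by
  have key := sum_comb P hPc T (fun z _ => h (comb (S ∩ T) x z))
  unfold proj
  calc ∑ z, P z * ∑ w, P w * h (comb T (comb S x z) w)
      = ∑ z, ∑ w, P z * P w * h (comb (S ∩ T) x (comb T z w)) := by
        simp only [Finset.mul_sum]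
        refine Finset.sum_congr rfl fun z _ => Finset.sum_congr rfl fun w _ => ?_
        rw [comb_assoc]
        ring
    _ = ∑ z, ∑ w, P z * P w * h (comb (S ∩ T) x z) := key
    _ = ∑ z, P z * h (comb (S ∩ T) x z) := by
        refine Finset.sum_congr rfl fun z _ => ?_
        calc ∑ w, P z * P w * h (comb (S ∩ T) x z)
            = (P z * h (comb (S ∩ T) x z)) * ∑ w, P w := by
              rw [Finset.mul_sum]
              exact Finset.sum_congr rfl fun w _ => by ring
          _ = P z * h (comb (S ∩ T) x z) := by rw [hP1, mul_one]

lemma ip_proj_proj (hP1 : ∑ x, P x = 1)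
    (hPc : ∀ (T : Finset (Fin n)) (z w : ∀ i, X i),
      P (comb T z w) * P (comb T w z) = P z * P w)
    (T T' : Finset (Fin n)) (Y : (∀ i, X i) → ℝ) :
    ip P (proj P T Y) (proj P T' Y) = ip P Y (proj P (T' ∩ T) Y) := by
  rw [ip_selfadj P hPc T' (proj P T Y) Y]
  refine Finset.sum_congr rfl fun x _ => ?_
  rw [proj_comp P hP1 hPc T' T Y x]

lemma key_ineq (hP0 : ∀ x, 0 ≤ P x) (hP1 : ∑ x, P x = 1)
    (hPc : ∀ (T : Finset (Fin n)) (z w : ∀ i, X i),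
      P (comb T z w) * P (comb T w z) = P z * P w)
    (Y : (∀ i, X i) → ℝ)
    (S S' : Finset (Fin n)) (hSS' : S ⊆ S') (i : Fin n) (hi : i ∉ S') :
    ip P Y (proj P (insert i S) Y) - ip P Y (proj P S Y)
      ≤ ip P Y (proj P (insert i S') Y) - ip P Y (proj P S' Y) := by
  set T1 := insert i S with hT1
  set T2 := insert i S' with hT2
  have hT1T2 : T1 ⊆ T2 := insert_subset_insert _ hSS'
  have hST1 : S ⊆ T1 := subset_insert _ _
  have hST2 : S ⊆ T2 := hST1.trans hT1T2
  have h11 : T1 ∩ T1 = T1 := inter_self _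
  have h21 : T2 ∩ T1 = T1 := inter_eq_right.mpr hT1T2
  have hS'T1 : S' ∩ T1 = S := by
    rw [inter_comm, hT1, insert_inter_of_notMem hi, inter_eq_left.mpr hSS']
  have hT2S : T2 ∩ S = S := inter_eq_right.mpr hST2
  have hS'S : S' ∩ S = S := inter_eq_right.mpr hSS'
  have hST1' : S ∩ T1 = S := inter_eq_left.mpr hST1
  have hT1S : T1 ∩ S = S := inter_eq_right.mpr hST1
  have hSS : S ∩ S = S := inter_self _
  have h22 : T2 ∩ T2 = T2 := inter_self _
  have hT2S' : T2 ∩ S' = S' := inter_eq_right.mpr (subset_insert _ _)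
  have hS'T2 : S' ∩ T2 = S' := inter_eq_left.mpr (subset_insert _ _)
  have hS'S' : S' ∩ S' = S' := inter_self _
  set a := ip P Y (proj P T1 Y) with ha
  set b := ip P Y (proj P S Y) with hb
  set a' := ip P Y (proj P T2 Y) with ha'
  set b' := ip P Y (proj P S' Y) with hb'
  have hAA : ip P (fun x => proj P T1 Y x - proj P S Y x)
      (fun x => proj P T1 Y x - proj P S Y x) = a - b := by
    rw [ip_sub_sub, ip_proj_proj P hP1 hPc, ip_proj_proj P hP1 hPc,
      ip_proj_proj P hP1 hPc, ip_proj_proj P hP1 hPc, h11, hST1', hT1S, hSS]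
    ring
  have hBB : ip P (fun x => proj P T2 Y x - proj P S' Y x)
      (fun x => proj P T2 Y x - proj P S' Y x) = a' - b' := by
    rw [ip_sub_sub, ip_proj_proj P hP1 hPc, ip_proj_proj P hP1 hPc,
      ip_proj_proj P hP1 hPc, ip_proj_proj P hP1 hPc, h22, hS'T2, hT2S', hS'S']
    ring
  have h12 : T1 ∩ T2 = T1 := inter_eq_left.mpr hT1T2
  have hST2' : S ∩ T2 = S := inter_eq_left.mpr hST2
  have hT1S' : T1 ∩ S' = S := by
    rw [hT1, insert_inter_of_notMem hi, inter_eq_left.mpr hSS']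
  have hSS2 : S ∩ S' = S := inter_eq_left.mpr hSS'
  have hBA : ip P (fun x => proj P T2 Y x - proj P S' Y x)
      (fun x => proj P T1 Y x - proj P S Y x) = a - b := by
    rw [ip_sub_sub, ip_proj_proj P hP1 hPc, ip_proj_proj P hP1 hPc,
      ip_proj_proj P hP1 hPc, ip_proj_proj P hP1 hPc, h12, hST2', hT1S', hSS2]
    ring
  have hAB : ip P (fun x => proj P T1 Y x - proj P S Y x)
      (fun x => proj P T2 Y x - proj P S' Y x) = a - b := by
    rw [ip_comm]
    exact hBA
  have h0 : 0 ≤ ip P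
      (fun x => (proj P T2 Y x - proj P S' Y x) - (proj P T1 Y x - proj P S Y x))
      (fun x => (proj P T2 Y x - proj P S' Y x) - (proj P T1 Y x - proj P S Y x)) :=
    ip_nonneg P hP0 _
  rw [ip_sub_sub P (fun x => proj P T2 Y x - proj P S' Y x)
      (fun x => proj P T1 Y x - proj P S Y x)
      (fun x => proj P T2 Y x - proj P S' Y x)
      (fun x => proj P T1 Y x - proj P S Y x), hBB, hBA, hAB, hAA] at h0
  linarith

lemma condPr_eq {C : Type*} (hP0 : ∀ x, 0 ≤ P x) (hP1 : ∑ x, P x = 1)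
    (hPc : ∀ (T : Finset (Fin n)) (z w : ∀ i, X i),
      P (comb T z w) * P (comb T w z) = P z * P w)
    (f : (∀ i, X i) → C) (S : Finset (Fin n)) (x : ∀ i, X i) (hx : 0 < P x) :
    condPr P (fun z => f z = f x) (fun z => ∀ i ∈ S, z i = x i)
      = ∑ z, P z * (if f (comb S x z) = f x then (1:ℝ) else 0) := by
  have hiff : ∀ w : ∀ i, X i, ∀ z : ∀ i, X i,
      ((∀ i ∈ S, comb S w z i = x i) ↔ (∀ i ∈ S, w i = x i)) := by
    intro w z
    constructor <;> intro h i hi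
    · have := h i hi; simpa [comb, hi] using this
    · simp [comb, hi, h i hi]
  have hDpos : (0:ℝ) < ∑ z, if (∀ i ∈ S, z i = x i) then P z else 0 := by
    have h1 : (if (∀ i ∈ S, x i = x i) then P x else 0)
        ≤ ∑ z, if (∀ i ∈ S, z i = x i) then P z else 0 :=
      Finset.single_le_sum (f := fun z => if (∀ i ∈ S, z i = x i) then P z else 0)
        (fun z _ => by split <;> simp [hP0 z]) (mem_univ x)
    rw [if_pos (fun i _ => rfl)] at h1
    linarith
  have hN : (∑ z, if f z = f x ∧ (∀ i ∈ S, z i = x i) then P z else 0)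
      = (∑ z, if (∀ i ∈ S, z i = x i) then P z else 0)
        * ∑ z, P z * (if f (comb S x z) = f x then (1:ℝ) else 0) := by
    have step1 : (∑ w, ∑ z, P w * P z *
          ((if ∀ i ∈ S, w i = x i then (1:ℝ) else 0) * (if f w = f x then (1:ℝ) else 0)))
        = ∑ w, if f w = f x ∧ (∀ i ∈ S, w i = x i) then P w else 0 := by
      refine Finset.sum_congr rfl fun w _ => ?_
      calc ∑ z, P w * P z *
            ((if ∀ i ∈ S, w i = x i then (1:ℝ) else 0) * (if f w = f x then (1:ℝ) else 0))
          = (P w * ((if ∀ i ∈ S, w i = x i then (1:ℝ) else 0)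
              * (if f w = f x then (1:ℝ) else 0))) * ∑ z, P z := by
            rw [Finset.mul_sum]
            exact Finset.sum_congr rfl fun z _ => by ring
        _ = if f w = f x ∧ (∀ i ∈ S, w i = x i) then P w else 0 := by
            rw [hP1, mul_one]
            by_cases hB : ∀ i ∈ S, w i = x i <;> by_cases hf : f w = f x <;>
              simp [hB, hf]
    have step2 := sum_comb P hPc S
      (fun w _ => (if ∀ i ∈ S, w i = x i then (1:ℝ) else 0) * (if f w = f x then (1:ℝ) else 0))
    have step3 : (∑ w, ∑ z, (if (∀ i ∈ S, w i = x i) then P w else 0)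
          * (P z * (if f (comb S x z) = f x then (1:ℝ) else 0)))
        = ∑ w, ∑ z, P w * P z *
          ((if ∀ i ∈ S, comb S w z i = x i then (1:ℝ) else 0)
            * (if f (comb S w z) = f x then (1:ℝ) else 0)) := by
      refine Finset.sum_congr rfl fun w _ => Finset.sum_congr rfl fun z _ => ?_
      by_cases hB : ∀ i ∈ S, w i = x i
      · have hxw : comb S x z = comb S w z := by
          funext j
          by_cases hj : j ∈ S <;> simp [comb, hj]
          exact (hB j hj).symm
        rw [if_pos hB, hxw, if_pos ((hiff w z).mpr hB)]
        ring
      · rw [if_neg hB, if_neg (fun h => hB ((hiff w z).mp h))]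
        ring
    rw [Finset.sum_mul_sum, step3, step2, step1]
  have hgoal : (∑ z, if f z = f x ∧ (∀ i ∈ S, z i = x i) then P z else 0) /
      (∑ z, if (∀ i ∈ S, z i = x i) then P z else 0)
      = ∑ z, P z * (if f (comb S x z) = f x then (1:ℝ) else 0) := by
    rw [hN, mul_div_cancel_left₀ _ (ne_of_gt hDpos)]
  unfold condPr
  simp only []
  convert hgoal using 4

lemma vgSuff_eq {C : Type*} [Fintype C] (hP0 : ∀ x, 0 ≤ P x) (hP1 : ∑ x, P x = 1)
    (hPc : ∀ (T : Finset (Fin n)) (z w : ∀ i, X i),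
      P (comb T z w) * P (comb T w z) = P z * P w)
    (f : (∀ i, X i) → C) (S : Finset (Fin n)) :
    vgSuff f P S = ∑ c, ip P (fun x => if f x = c then (1:ℝ) else 0)
      (proj P S (fun x => if f x = c then (1:ℝ) else 0)) := by
  have h1 : vgSuff f P S
      = ∑ x, P x * ∑ z, P z * (if f (comb S x z) = f x then (1:ℝ) else 0) := by
    rw [vgSuff, Finset.sum_filter]
    refine Finset.sum_congr rfl fun x _ => ?_
    by_cases hx : 0 < P x
    · rw [if_pos hx, condPr_eq P hP0 hP1 hPc f S x hx]
    · have hx0 : P x = 0 := le_antisymm (not_lt.mp hx) (hP0 x)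
      rw [if_neg hx, hx0, zero_mul]
  rw [h1]
  unfold ip proj
  rw [Finset.sum_comm]
  refine Finset.sum_congr rfl fun x _ => ?_
  simp only []
  symm
  calc ∑ c, P x * ((if f x = c then (1:ℝ) else 0)
        * ∑ z, P z * (if f (comb S x z) = c then (1:ℝ) else 0))
      = ∑ c, if f x = c
          then P x * ∑ z, P z * (if f (comb S x z) = c then (1:ℝ) else 0) else 0 := by
        refine Finset.sum_congr rfl fun c _ => ?_
        by_cases hc : f x = c <;> simp [hc]
    _ = P x * ∑ z, P z * (if f (comb S x z) = f x then (1:ℝ) else 0) := by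
        rw [Finset.sum_ite_eq]
        simp

end VgAux

/-- under a product (feature-independent) distribution, the global
sufficient value function is supermodular. -/
theorem vgSuff_supermodular {n : ℕ} {X : Fin n → Type*}
    [∀ i, Fintype (X i)] [∀ i, Nonempty (X i)]
    {C : Type*} [Fintype C] [Nonempty C]
    (f : (∀ i, X i) → C) (P : (∀ i, X i) → ℝ)
    (hP0 : ∀ x, 0 ≤ P x) (hP1 : ∑ x, P x = 1)
    (p : ∀ i, X i → ℝ) (hp0 : ∀ i v, 0 ≤ p i v)
    (hprod : ∀ x, P x = ∏ i, p i (x i))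
    (S S' : Finset (Fin n)) (hSS' : S ⊆ S') (i : Fin n) (hi : i ∉ S') :
    vgSuff f P (insert i S) - vgSuff f P S ≤
      vgSuff f P (insert i S') - vgSuff f P S' := by
  classical
  have hPc : ∀ (T : Finset (Fin n)) (z w : ∀ i, X i),
      P (VgAux.comb T z w) * P (VgAux.comb T w z) = P z * P w := by
    intro T z w
    rw [hprod, hprod, hprod, hprod, ← Finset.prod_mul_distrib, ← Finset.prod_mul_distrib]
    exact Finset.prod_congr rfl fun j _ => by
      by_cases h : j ∈ T <;> simp [VgAux.comb, h, mul_comm]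
  have hv := fun T => VgAux.vgSuff_eq P hP0 hP1 hPc f T
  rw [hv, hv, hv, hv, ← Finset.sum_sub_distrib, ← Finset.sum_sub_distrib]
  exact Finset.sum_le_sum fun c _ =>
    VgAux.key_ineq P hP0 hP1 hPc _ S S' hSS' i hi
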